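/- Let x : ℕ × ℤ⁴ → ℝ be a family of real numbers such that x(ℓ,m) = 0 whenever m ∉ N(ℓ), x(0,m) = x(1,m) = 0 for all m, and Σ_{ℓ,m} (ℓ+2)²·x(ℓ,m)² < ∞. Then Σ_{ℓ≥2} Σ_{m∈N(ℓ)} [ α(ℓ,m₁)·x(ℓ,m)² + β(ℓ,m₁)·x(ℓ,m)·x(ℓ+1,m) ] ≥ (18/85) · Σ_{ℓ≥2} Σ_{m∈N(ℓ)} [ (ℓ+2)²·x(ℓ,m)² + 2·C₅(ℓ,m₁)·(ℓ+2)·(ℓ+3)·x(ℓ,m)·x(ℓ+1,m) ], where both series converge absolutely. (This is the spectral-gap inequality expressing, in spherical-harmonic coefficients after the Penrose transform, the coercivity Q((f₀,0),(f₀,0)) ≥ (36/85)(1/(8π))‖(f₀,0)‖² for data orthogonal to the tangent space of the manifold of maximisers.) -/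
import Mathlib


/-- `m = (m₁, m₂, m₃, m₄) ∈ ℤ⁴` belongs to `N(ℓ)` iff `ℓ ≥ m₁ ≥ m₂ ≥ m₃ ≥ |m₄|`. -/
def inN (ℓ : ℕ) (m : ℤ × ℤ × ℤ × ℤ) : Prop :=
  m.1 ≤ (ℓ : ℤ) ∧ m.2.1 ≤ m.1 ∧ m.2.2.1 ≤ m.2.1 ∧ |m.2.2.2| ≤ m.2.2.1

instance (ℓ : ℕ) (m : ℤ × ℤ × ℤ × ℤ) : Decidable (inN ℓ m) := by
  unfold inN; infer_instance

/-- The coefficient `C₅(ℓ, m₁)`. -/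
noncomputable def C₅ (ℓ : ℕ) (m₁ : ℤ) : ℝ :=
  if 0 ≤ m₁ ∧ m₁ ≤ (ℓ : ℤ) then
    (1 / 2) * Real.sqrt ((((ℓ : ℝ) - (m₁ : ℝ) + 1) * ((ℓ : ℝ) + (m₁ : ℝ) + 4)) /
      (((ℓ : ℝ) + 2) * ((ℓ : ℝ) + 3)))
  else 0

/-- The coefficient `α(ℓ, m₁)`. -/
noncomputable def αc (ℓ : ℕ) (m₁ : ℤ) : ℝ :=
  ((ℓ : ℝ) ^ 4 + 8 * (ℓ : ℝ) ^ 3 + 11 * (ℓ : ℝ) ^ 2 - 20 * (ℓ : ℝ) - 12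
      + 6 * (m₁ : ℝ) ^ 2 + 18 * (m₁ : ℝ)) / (((ℓ : ℝ) + 1) * ((ℓ : ℝ) + 3))

/-- The coefficient `β(ℓ, m₁)`. -/
noncomputable def βc (ℓ : ℕ) (m₁ : ℤ) : ℝ :=
  ((ℓ : ℝ) - 1) * ((ℓ : ℝ) + 6) *
    Real.sqrt ((((ℓ : ℝ) + 1 - (m₁ : ℝ)) * ((ℓ : ℝ) + 4 + (m₁ : ℝ))) /
      (((ℓ : ℝ) + 2) * ((ℓ : ℝ) + 3)))

noncomputable def Gc (ℓ : ℕ) : ℝ :=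
  2 * ((ℓ : ℝ) - 1) * ((ℓ : ℝ) + 6) - (36 / 85) * ((ℓ : ℝ) + 2) * ((ℓ : ℝ) + 3)

noncomputable def tw (ℓ : ℕ) : ℝ := if ℓ = 2 then 3 / 8 else 1 / 2

noncomputable def Ac (ℓ : ℕ) (m₁ : ℤ) : ℝ := αc ℓ m₁ - (18 / 85) * ((ℓ : ℝ) + 2) ^ 2

noncomputable def dd (ℓ : ℕ) (m₁ : ℤ) : ℝ :=
  if 2 ≤ ℓ then Ac ℓ m₁ - Gc ℓ * C₅ ℓ m₁ * tw ℓ else 0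

noncomputable def ee (ℓ : ℕ) (m₁ : ℤ) : ℝ :=
  if 2 ≤ ℓ then Gc ℓ * C₅ ℓ m₁ / (4 * tw ℓ) else 0

lemma tw_pos (ℓ : ℕ) : 0 < tw ℓ := by unfold tw; split <;> norm_num

lemma tw_le (ℓ : ℕ) : tw ℓ ≤ 1 / 2 := by unfold tw; split <;> norm_num

lemma tw_ge (ℓ : ℕ) : 3 / 8 ≤ tw ℓ := by unfold tw; split <;> norm_num

lemma C5_nonneg (ℓ : ℕ) (m₁ : ℤ) : 0 ≤ C₅ ℓ m₁ := by
  unfold C₅; split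
  · positivity
  · exact le_refl 0

lemma C5_le_C5_zero (ℓ : ℕ) (m₁ : ℤ) : C₅ ℓ m₁ ≤ C₅ ℓ 0 := by
  have h0 : (0:ℤ) ≤ 0 ∧ (0:ℤ) ≤ (ℓ:ℤ) := ⟨le_refl _, Int.ofNat_nonneg ℓ⟩
  unfold C₅
  rw [if_pos h0]
  split
  · rename_i h
    have hm0 : (0:ℝ) ≤ (m₁:ℝ) := by exact_mod_cast h.1
    have hden : (0:ℝ) < ((ℓ : ℝ) + 2) * ((ℓ : ℝ) + 3) := by positivity
    have harg : (((ℓ : ℝ) - (m₁ : ℝ) + 1) * ((ℓ : ℝ) + (m₁ : ℝ) + 4))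
        ≤ (((ℓ : ℝ) - ((0:ℤ) : ℝ) + 1) * ((ℓ : ℝ) + ((0:ℤ) : ℝ) + 4)) := by
      push_cast; nlinarith
    have := Real.sqrt_le_sqrt ((div_le_div_iff_of_pos_right hden).mpr harg)
    linarith
  · positivity

lemma C5_zero_le_half (ℓ : ℕ) : C₅ ℓ 0 ≤ 1 / 2 := by
  have h0 : (0:ℤ) ≤ 0 ∧ (0:ℤ) ≤ (ℓ:ℤ) := ⟨le_refl _, Int.ofNat_nonneg ℓ⟩
  unfold C₅
  rw [if_pos h0]
  have hs : Real.sqrt ((((ℓ : ℝ) - ((0:ℤ) : ℝ) + 1) * ((ℓ : ℝ) + ((0:ℤ) : ℝ) + 4)) /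
      (((ℓ : ℝ) + 2) * ((ℓ : ℝ) + 3))) ≤ 1 := by
    apply Real.sqrt_le_one.mpr
    rw [div_le_one (by positivity)]
    push_cast; nlinarith [Nat.cast_nonneg (α := ℝ) ℓ]
  linarith

lemma C5_le_half (ℓ : ℕ) (m₁ : ℤ) : C₅ ℓ m₁ ≤ 1 / 2 :=
  le_trans (C5_le_C5_zero ℓ m₁) (C5_zero_le_half ℓ)

lemma beta_eq (ℓ : ℕ) (m₁ : ℤ) (hm0 : 0 ≤ m₁) (hml : m₁ ≤ (ℓ:ℤ)) :
    βc ℓ m₁ = 2 * ((ℓ : ℝ) - 1) * ((ℓ : ℝ) + 6) * C₅ ℓ m₁ := by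
  unfold βc C₅
  rw [if_pos ⟨hm0, hml⟩,
    show (((ℓ : ℝ) + 1 - (m₁ : ℝ)) * ((ℓ : ℝ) + 4 + (m₁ : ℝ)))
      = (((ℓ : ℝ) - (m₁ : ℝ) + 1) * ((ℓ : ℝ) + (m₁ : ℝ) + 4)) from by ring]
  ring

lemma Ac_mono (ℓ : ℕ) (m₁ : ℤ) (hm0 : 0 ≤ m₁) : Ac ℓ 0 ≤ Ac ℓ m₁ := by
  have hm0' : (0:ℝ) ≤ (m₁:ℝ) := by exact_mod_cast hm0
  unfold Ac αc
  have hden : (0:ℝ) < ((ℓ : ℝ) + 1) * ((ℓ : ℝ) + 3) := by positivity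
  have hden : (0:ℝ) < ((ℓ : ℝ) + 1) * ((ℓ : ℝ) + 3) := by positivity
  have h : ((ℓ : ℝ) ^ 4 + 8 * (ℓ : ℝ) ^ 3 + 11 * (ℓ : ℝ) ^ 2 - 20 * (ℓ : ℝ) - 12
      + 6 * (((0:ℤ)) : ℝ) ^ 2 + 18 * (((0:ℤ)) : ℝ))
      ≤ ((ℓ : ℝ) ^ 4 + 8 * (ℓ : ℝ) ^ 3 + 11 * (ℓ : ℝ) ^ 2 - 20 * (ℓ : ℝ) - 12
      + 6 * ((m₁ : ℤ) : ℝ) ^ 2 + 18 * ((m₁ : ℤ) : ℝ)) := by push_cast; nlinarith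
  exact sub_le_sub_right ((div_le_div_iff_of_pos_right hden).mpr h) _

lemma Gc_nonneg (ℓ : ℕ) (h : 2 ≤ ℓ) : 0 ≤ Gc ℓ := by
  have h' : (2:ℝ) ≤ (ℓ:ℝ) := by exact_mod_cast h
  unfold Gc; nlinarith

lemma Gc_le (ℓ : ℕ) : Gc ℓ ≤ 2 * ((ℓ : ℝ) + 2) * ((ℓ : ℝ) + 3) := by
  have h' : (0:ℝ) ≤ (ℓ:ℝ) := Nat.cast_nonneg ℓ
  unfold Gc; nlinarith

lemma key3 (ℓ : ℕ) (h : 3 ≤ ℓ) : Gc ℓ / 4 + Gc (ℓ+1) / 4 ≤ Ac (ℓ+1) 0 := by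
  have hkey : Ac (ℓ+1) 0 - (Gc ℓ / 4 + Gc (ℓ+1) / 4)
      = 12 / (((ℓ:ℝ) + 2) * ((ℓ:ℝ) + 4)) := by
    unfold Ac αc Gc
    have h2 : (0:ℝ) < (ℓ:ℝ) + 2 := by positivity
    have h4 : (0:ℝ) < (ℓ:ℝ) + 4 := by positivity
    push_cast
    field_simp
    ring
  have : (0:ℝ) < ((ℓ:ℝ) + 2) * ((ℓ:ℝ) + 4) := by positivity
  nlinarith [div_nonneg (by norm_num : (0:ℝ) ≤ 12) this.le]

lemma C5_20 : C₅ 2 0 = (1/2) * Real.sqrt (9/10) := by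
  unfold C₅
  rw [if_pos ⟨le_refl _, by norm_num⟩]
  norm_num

lemma C5_30 : C₅ 3 0 = (1/2) * Real.sqrt (14/15) := by
  unfold C₅
  rw [if_pos ⟨le_refl _, by norm_num⟩]
  rw [show ((((3:ℕ) : ℝ) - ((0:ℤ) : ℝ) + 1) * (((3:ℕ) : ℝ) + ((0:ℤ) : ℝ) + 4)) /
      ((((3:ℕ) : ℝ) + 2) * (((3:ℕ) : ℝ) + 3)) = 14/15 from by push_cast; norm_num]

lemma Ac20 : Ac 2 0 = 24/17 := by unfold Ac αc; norm_num
lemma Ac30 : Ac 3 0 = 279/34 := by unfold Ac αc; norm_num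
lemma Gc2 : Gc 2 = 128/17 := by unfold Gc; norm_num
lemma Gc3 : Gc 3 = 396/17 := by unfold Gc; norm_num

lemma s2_bound : Real.sqrt (9/10 : ℝ) ≤ 19/20 := by
  nlinarith [Real.sq_sqrt (show (0:ℝ) ≤ 9/10 by norm_num), Real.sqrt_nonneg (9/10:ℝ)]

lemma s3_bound : Real.sqrt (14/15 : ℝ) ≤ 97/100 := by
  nlinarith [Real.sq_sqrt (show (0:ℝ) ≤ 14/15 by norm_num), Real.sqrt_nonneg (14/15:ℝ)]

lemma key1 (m₁ : ℤ) (hm0 : 0 ≤ m₁) : ee 1 m₁ ≤ dd 2 m₁ := by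
  have h1 : ee 1 m₁ = 0 := by unfold ee; rw [if_neg (by norm_num)]
  have h2 : dd 2 m₁ = Ac 2 m₁ - Gc 2 * C₅ 2 m₁ * (3/8) := by
    unfold dd tw; rw [if_pos (by norm_num), if_pos rfl]
  rw [h1, h2]
  have hm := Ac_mono 2 m₁ hm0
  have hc := C5_le_C5_zero 2 m₁
  have hc0 := C5_nonneg 2 m₁
  rw [Ac20] at hm; rw [C5_20] at hc
  have hs := s2_bound; have hsn := Real.sqrt_nonneg (9/10:ℝ)
  rw [Gc2]; nlinarith

lemma key2 (m₁ : ℤ) (hm0 : 0 ≤ m₁) : ee 2 m₁ ≤ dd 3 m₁ := by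
  have h1 : ee 2 m₁ = Gc 2 * C₅ 2 m₁ * (2/3) := by
    unfold ee tw; rw [if_pos (by norm_num), if_pos rfl]; ring
  have h2 : dd 3 m₁ = Ac 3 m₁ - Gc 3 * C₅ 3 m₁ * (1/2) := by
    unfold dd tw; rw [if_pos (by norm_num), if_neg (by norm_num)]
  rw [h1, h2]
  have hm := Ac_mono 3 m₁ hm0
  have hc2 := C5_le_C5_zero 2 m₁
  have hc3 := C5_le_C5_zero 3 m₁
  have hc20 := C5_nonneg 2 m₁
  have hc30 := C5_nonneg 3 m₁
  rw [Ac30] at hm; rw [C5_20] at hc2; rw [C5_30] at hc3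
  have hs2 := s2_bound; have hs3 := s3_bound
  have hsn2 := Real.sqrt_nonneg (9/10:ℝ); have hsn3 := Real.sqrt_nonneg (14/15:ℝ)
  rw [Gc2, Gc3]; nlinarith

lemma keybig (ℓ : ℕ) (h : 3 ≤ ℓ) (m₁ : ℤ) (hm0 : 0 ≤ m₁) : ee ℓ m₁ ≤ dd (ℓ+1) m₁ := by
  have h1 : ee ℓ m₁ = Gc ℓ * C₅ ℓ m₁ * (1/2) := by
    unfold ee tw; rw [if_pos (by omega), if_neg (by omega)]; ring
  have h2 : dd (ℓ+1) m₁ = Ac (ℓ+1) m₁ - Gc (ℓ+1) * C₅ (ℓ+1) m₁ * (1/2) := by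
    unfold dd tw; rw [if_pos (by omega), if_neg (by omega)]
  rw [h1, h2]
  have hg := Gc_nonneg ℓ (by omega)
  have hg' := Gc_nonneg (ℓ+1) (by omega)
  have hc := C5_le_half ℓ m₁
  have hc' := C5_le_half (ℓ+1) m₁
  have hc0 := C5_nonneg ℓ m₁
  have hc0' := C5_nonneg (ℓ+1) m₁
  have hA := Ac_mono (ℓ+1) m₁ hm0
  have hk3 := key3 ℓ h
  nlinarith [mul_nonneg hg (by linarith : (0:ℝ) ≤ 1/2 - C₅ ℓ m₁),
    mul_nonneg hg' (by linarith : (0:ℝ) ≤ 1/2 - C₅ (ℓ+1) m₁)]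

lemma hkey (ℓ : ℕ) (h : 1 ≤ ℓ) (m₁ : ℤ) (hm0 : 0 ≤ m₁) : ee ℓ m₁ ≤ dd (ℓ+1) m₁ := by
  by_cases h3 : 3 ≤ ℓ
  · exact keybig ℓ h3 m₁ hm0
  · interval_cases ℓ
    · exact key1 m₁ hm0
    · exact key2 m₁ hm0

lemma ee_nonneg (ℓ : ℕ) (m₁ : ℤ) : 0 ≤ ee ℓ m₁ := by
  unfold ee; split
  · exact div_nonneg (mul_nonneg (Gc_nonneg ℓ ‹_›) (C5_nonneg ℓ m₁))
      (by linarith [tw_pos ℓ])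
  · exact le_refl 0

lemma dd_nonneg (ℓ : ℕ) (h : 2 ≤ ℓ) (m₁ : ℤ) (hm0 : 0 ≤ m₁) : 0 ≤ dd ℓ m₁ := by
  obtain ⟨k, rfl⟩ : ∃ k, ℓ = k + 1 := ⟨ℓ - 1, by omega⟩
  exact le_trans (ee_nonneg k m₁) (hkey k (by omega) m₁ hm0)

lemma ee_le (ℓ : ℕ) (m₁ : ℤ) : ee ℓ m₁ ≤ ((ℓ:ℝ)+3)^2 := by
  unfold ee; split
  · rename_i h2
    have hg := Gc_nonneg ℓ h2
    have hgl := Gc_le ℓ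
    have hc := C5_le_half ℓ m₁
    have hc0 := C5_nonneg ℓ m₁
    have ht := tw_ge ℓ
    have htp := tw_pos ℓ
    have hl0 : (0:ℝ) ≤ (ℓ:ℝ) := Nat.cast_nonneg ℓ
    have h1 : Gc ℓ * C₅ ℓ m₁ / (4 * tw ℓ) ≤ Gc ℓ * C₅ ℓ m₁ / (3/2) := by
      have hnum := mul_nonneg hg hc0
      gcongr
      linarith
    have h2' : Gc ℓ * C₅ ℓ m₁ ≤ (2 * ((ℓ:ℝ)+2) * ((ℓ:ℝ)+3)) * (1/2) := by
      apply mul_le_mul hgl hc hc0 (by positivity)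
    nlinarith
  · positivity

lemma alpha_abs (ℓ : ℕ) (m₁ : ℤ) (h2 : 2 ≤ ℓ) (hm0 : 0 ≤ m₁) (hml : m₁ ≤ (ℓ:ℤ)) :
    |αc ℓ m₁| ≤ 2 * ((ℓ:ℝ)+2)^2 := by
  have h2' : (2:ℝ) ≤ (ℓ:ℝ) := by exact_mod_cast h2
  have hm0' : (0:ℝ) ≤ (m₁:ℝ) := by exact_mod_cast hm0
  have hml' : (m₁:ℝ) ≤ (ℓ:ℝ) := by exact_mod_cast hml
  have hden : (0:ℝ) < ((ℓ : ℝ) + 1) * ((ℓ : ℝ) + 3) := by positivity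
  unfold αc
  rw [abs_div, abs_of_pos hden, div_le_iff₀ hden, abs_le]
  constructor
  · nlinarith [mul_nonneg (sub_nonneg.mpr hml') hm0']
  · nlinarith [mul_nonneg (sub_nonneg.mpr hml') hm0',
      mul_nonneg (sub_nonneg.mpr hml') (sub_nonneg.mpr hml')]

lemma beta_nonneg (ℓ : ℕ) (m₁ : ℤ) (h2 : 2 ≤ ℓ) : 0 ≤ βc ℓ m₁ := by
  have h2' : (2:ℝ) ≤ (ℓ:ℝ) := by exact_mod_cast h2
  unfold βc
  have := Real.sqrt_nonneg ((((ℓ : ℝ) + 1 - (m₁ : ℝ)) * ((ℓ : ℝ) + 4 + (m₁ : ℝ))) /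
      (((ℓ : ℝ) + 2) * ((ℓ : ℝ) + 3)))
  have : (0:ℝ) ≤ ((ℓ : ℝ) - 1) * ((ℓ : ℝ) + 6) := by nlinarith
  positivity

lemma beta_le (ℓ : ℕ) (m₁ : ℤ) (h2 : 2 ≤ ℓ) (hm0 : 0 ≤ m₁) (hml : m₁ ≤ (ℓ:ℤ)) :
    βc ℓ m₁ ≤ ((ℓ:ℝ)+2) * ((ℓ:ℝ)+3) := by
  have h2' : (2:ℝ) ≤ (ℓ:ℝ) := by exact_mod_cast h2
  have hm0' : (0:ℝ) ≤ (m₁:ℝ) := by exact_mod_cast hm0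
  have hml' : (m₁:ℝ) ≤ (ℓ:ℝ) := by exact_mod_cast hml
  unfold βc
  have hs : Real.sqrt ((((ℓ : ℝ) + 1 - (m₁ : ℝ)) * ((ℓ : ℝ) + 4 + (m₁ : ℝ))) /
      (((ℓ : ℝ) + 2) * ((ℓ : ℝ) + 3))) ≤ 1 := by
    apply Real.sqrt_le_one.mpr
    rw [div_le_one (by positivity)]
    nlinarith
  have hc : (0:ℝ) ≤ ((ℓ:ℝ)-1)*((ℓ:ℝ)+6) := by nlinarith
  calc ((ℓ : ℝ) - 1) * ((ℓ : ℝ) + 6) *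
      Real.sqrt ((((ℓ : ℝ) + 1 - (m₁ : ℝ)) * ((ℓ : ℝ) + 4 + (m₁ : ℝ))) /
        (((ℓ : ℝ) + 2) * ((ℓ : ℝ) + 3)))
      ≤ ((ℓ:ℝ)-1)*((ℓ:ℝ)+6) := mul_le_of_le_one_right hc hs
    _ ≤ ((ℓ:ℝ)+2) * ((ℓ:ℝ)+3) := by nlinarith

def shiftσ : ℕ × (ℤ × ℤ × ℤ × ℤ) → ℕ × (ℤ × ℤ × ℤ × ℤ) := fun p => (p.1 + 1, p.2)

lemma shiftσ_inj : Function.Injective shiftσ := by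
  intro a b h
  unfold shiftσ at h
  simp only [Prod.mk.injEq] at h
  exact Prod.ext (by omega) h.2

noncomputable def Ef (x : ℕ → ℤ × ℤ × ℤ × ℤ → ℝ) : ℕ × (ℤ × ℤ × ℤ × ℤ) → ℝ :=
  fun p => dd p.1 p.2.1 * x p.1 p.2 ^ 2

noncomputable def Ff (x : ℕ → ℤ × ℤ × ℤ × ℤ → ℝ) : ℕ × (ℤ × ℤ × ℤ × ℤ) → ℝ :=
  fun p => ee p.1 p.2.1 * x (p.1 + 1) p.2 ^ 2


/-- **Spectral gap for the position component.** If `x(ℓ,m)` vanishes for `m ∉ N(ℓ)` and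
for `ℓ = 0, 1`, and `Σ (ℓ+2)² x(ℓ,m)² < ∞`, then both tridiagonal series below converge
absolutely and
`Σ [α x² + β x x'] ≥ (18/85) Σ [(ℓ+2)² x² + 2 C₅ (ℓ+2)(ℓ+3) x x']`. -/
theorem spectral_gap_position
    (x : ℕ → ℤ × ℤ × ℤ × ℤ → ℝ)
    (hxN : ∀ (ℓ : ℕ) (m : ℤ × ℤ × ℤ × ℤ), ¬ inN ℓ m → x ℓ m = 0)
    (hx0 : ∀ m : ℤ × ℤ × ℤ × ℤ, x 0 m = 0)
    (hx1 : ∀ m : ℤ × ℤ × ℤ × ℤ, x 1 m = 0)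
    (hsum : Summable fun p : ℕ × (ℤ × ℤ × ℤ × ℤ) =>
      ((p.1 : ℝ) + 2) ^ 2 * x p.1 p.2 ^ 2) :
    (Summable fun p : ℕ × (ℤ × ℤ × ℤ × ℤ) =>
      |αc p.1 p.2.1 * x p.1 p.2 ^ 2 + βc p.1 p.2.1 * x p.1 p.2 * x (p.1 + 1) p.2|) ∧
    (Summable fun p : ℕ × (ℤ × ℤ × ℤ × ℤ) =>
      |((p.1 : ℝ) + 2) ^ 2 * x p.1 p.2 ^ 2
        + 2 * C₅ p.1 p.2.1 * ((p.1 : ℝ) + 2) * ((p.1 : ℝ) + 3)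
          * x p.1 p.2 * x (p.1 + 1) p.2|) ∧
    (18 / 85) * ∑' p : ℕ × (ℤ × ℤ × ℤ × ℤ),
        (((p.1 : ℝ) + 2) ^ 2 * x p.1 p.2 ^ 2
          + 2 * C₅ p.1 p.2.1 * ((p.1 : ℝ) + 2) * ((p.1 : ℝ) + 3)
            * x p.1 p.2 * x (p.1 + 1) p.2)
      ≤ ∑' p : ℕ × (ℤ × ℤ × ℤ × ℤ),
          (αc p.1 p.2.1 * x p.1 p.2 ^ 2 + βc p.1 p.2.1 * x p.1 p.2 * x (p.1 + 1) p.2) := by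
  classical
  -- support facts
  have hsupp : ∀ (ℓ : ℕ) (m : ℤ × ℤ × ℤ × ℤ), x ℓ m ≠ 0 →
      2 ≤ ℓ ∧ 0 ≤ m.1 ∧ m.1 ≤ (ℓ : ℤ) := by
    intro ℓ m hx
    have hN : inN ℓ m := by
      by_contra h; exact hx (hxN ℓ m h)
    obtain ⟨h1, h2, h3, h4⟩ := hN
    have h5 : (0 : ℤ) ≤ m.2.2.1 := le_trans (abs_nonneg _) h4
    have hℓ : 2 ≤ ℓ := by
      rcases ℓ with _ | _ | k
      · exact absurd (hx0 m) hx
      · exact absurd (hx1 m) hx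
      · omega
    exact ⟨hℓ, by omega, h1⟩
  have hsum3 : Summable fun p : ℕ × (ℤ × ℤ × ℤ × ℤ) =>
      ((p.1 : ℝ) + 3) ^ 2 * x (p.1 + 1) p.2 ^ 2 := by
    have h := hsum.comp_injective shiftσ_inj
    exact h.congr (fun p => by
      show ((((p.1 + 1 : ℕ)) : ℝ) + 2) ^ 2 * x (p.1 + 1) p.2 ^ 2 = _
      push_cast; ring)
  -- majorant
  have hg : Summable fun p : ℕ × (ℤ × ℤ × ℤ × ℤ) =>
      3 * ((p.1 : ℝ) + 2) ^ 2 * x p.1 p.2 ^ 2 + ((p.1 : ℝ) + 3) ^ 2 * x (p.1 + 1) p.2 ^ 2 :=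
    ((hsum.mul_left 3).add hsum3).congr (fun p => by ring)
  -- summability of the first series
  have HS1 : Summable fun p : ℕ × (ℤ × ℤ × ℤ × ℤ) =>
      |αc p.1 p.2.1 * x p.1 p.2 ^ 2 + βc p.1 p.2.1 * x p.1 p.2 * x (p.1 + 1) p.2| := by
    apply Summable.of_nonneg_of_le (fun p => abs_nonneg _) _ hg
    rintro ⟨ℓ, m⟩
    show |αc ℓ m.1 * x ℓ m ^ 2 + βc ℓ m.1 * x ℓ m * x (ℓ + 1) m|
      ≤ 3 * ((ℓ:ℝ)+2)^2 * x ℓ m ^ 2 + ((ℓ:ℝ)+3)^2 * x (ℓ + 1) m ^ 2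
    by_cases hx : x ℓ m = 0
    · simp only [hx]
      rw [show αc ℓ m.1 * (0:ℝ) ^ 2 + βc ℓ m.1 * 0 * x (ℓ + 1) m = 0 from by ring, abs_zero]
      positivity
    · obtain ⟨h2, hm0, hml⟩ := hsupp ℓ m hx
      have ha := alpha_abs ℓ m.1 h2 hm0 hml
      have hb0 := beta_nonneg ℓ m.1 h2
      have hb := beta_le ℓ m.1 h2 hm0 hml
      have tri : |αc ℓ m.1 * x ℓ m ^ 2 + βc ℓ m.1 * x ℓ m * x (ℓ + 1) m|
          ≤ |αc ℓ m.1| * x ℓ m ^ 2 + βc ℓ m.1 * (|x ℓ m| * |x (ℓ + 1) m|) := by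
        calc |αc ℓ m.1 * x ℓ m ^ 2 + βc ℓ m.1 * x ℓ m * x (ℓ + 1) m|
            ≤ |αc ℓ m.1 * x ℓ m ^ 2| + |βc ℓ m.1 * x ℓ m * x (ℓ + 1) m| := abs_add_le _ _
          _ = |αc ℓ m.1| * x ℓ m ^ 2 + βc ℓ m.1 * (|x ℓ m| * |x (ℓ + 1) m|) := by
              rw [abs_mul, abs_mul, abs_mul, abs_of_nonneg hb0,
                abs_of_nonneg (sq_nonneg (x ℓ m))]
              ring
      have hcross : βc ℓ m.1 * (|x ℓ m| * |x (ℓ + 1) m|)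
          ≤ (((ℓ:ℝ)+2)^2 * x ℓ m ^ 2 + ((ℓ:ℝ)+3)^2 * x (ℓ + 1) m ^ 2) / 2 := by
        have h1 : βc ℓ m.1 * (|x ℓ m| * |x (ℓ + 1) m|)
            ≤ (((ℓ:ℝ)+2) * ((ℓ:ℝ)+3)) * (|x ℓ m| * |x (ℓ + 1) m|) :=
          mul_le_mul_of_nonneg_right hb (mul_nonneg (abs_nonneg _) (abs_nonneg _))
        nlinarith [sq_nonneg (((ℓ:ℝ)+2) * |x ℓ m| - ((ℓ:ℝ)+3) * |x (ℓ + 1) m|),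
          sq_abs (x ℓ m), sq_abs (x (ℓ + 1) m)]
      have hax : |αc ℓ m.1| * x ℓ m ^ 2 ≤ 2 * ((ℓ:ℝ)+2)^2 * x ℓ m ^ 2 :=
        mul_le_mul_of_nonneg_right ha (sq_nonneg _)
      have hp1 : (0:ℝ) ≤ ((ℓ:ℝ)+2)^2 * x ℓ m ^ 2 := by positivity
      have hp2 : (0:ℝ) ≤ ((ℓ:ℝ)+3)^2 * x (ℓ + 1) m ^ 2 := by positivity
      linarith
  -- summability of the second series
  have HS2 : Summable fun p : ℕ × (ℤ × ℤ × ℤ × ℤ) =>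
      |((p.1 : ℝ) + 2) ^ 2 * x p.1 p.2 ^ 2
        + 2 * C₅ p.1 p.2.1 * ((p.1 : ℝ) + 2) * ((p.1 : ℝ) + 3)
          * x p.1 p.2 * x (p.1 + 1) p.2| := by
    apply Summable.of_nonneg_of_le (fun p => abs_nonneg _) _ hg
    rintro ⟨ℓ, m⟩
    show |((ℓ:ℝ)+2)^2 * x ℓ m ^ 2
        + 2 * C₅ ℓ m.1 * ((ℓ:ℝ)+2) * ((ℓ:ℝ)+3) * x ℓ m * x (ℓ + 1) m|
      ≤ 3 * ((ℓ:ℝ)+2)^2 * x ℓ m ^ 2 + ((ℓ:ℝ)+3)^2 * x (ℓ + 1) m ^ 2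
    have hC := C5_le_half ℓ m.1
    have hC0 := C5_nonneg ℓ m.1
    have hcoef0 : (0:ℝ) ≤ 2 * C₅ ℓ m.1 * ((ℓ:ℝ)+2) * ((ℓ:ℝ)+3) := by positivity
    have tri : |((ℓ:ℝ)+2)^2 * x ℓ m ^ 2
        + 2 * C₅ ℓ m.1 * ((ℓ:ℝ)+2) * ((ℓ:ℝ)+3) * x ℓ m * x (ℓ + 1) m|
        ≤ ((ℓ:ℝ)+2)^2 * x ℓ m ^ 2
          + (2 * C₅ ℓ m.1 * ((ℓ:ℝ)+2) * ((ℓ:ℝ)+3)) * (|x ℓ m| * |x (ℓ + 1) m|) := by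
      calc |((ℓ:ℝ)+2)^2 * x ℓ m ^ 2
          + 2 * C₅ ℓ m.1 * ((ℓ:ℝ)+2) * ((ℓ:ℝ)+3) * x ℓ m * x (ℓ + 1) m|
          ≤ |((ℓ:ℝ)+2)^2 * x ℓ m ^ 2|
            + |2 * C₅ ℓ m.1 * ((ℓ:ℝ)+2) * ((ℓ:ℝ)+3) * x ℓ m * x (ℓ + 1) m| := abs_add_le _ _
        _ = ((ℓ:ℝ)+2)^2 * x ℓ m ^ 2
            + (2 * C₅ ℓ m.1 * ((ℓ:ℝ)+2) * ((ℓ:ℝ)+3)) * (|x ℓ m| * |x (ℓ + 1) m|) := by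
            rw [abs_of_nonneg (by positivity : (0:ℝ) ≤ ((ℓ:ℝ)+2)^2 * x ℓ m ^ 2),
              abs_mul, abs_mul, abs_of_nonneg hcoef0]
            ring
    have hcross : (2 * C₅ ℓ m.1 * ((ℓ:ℝ)+2) * ((ℓ:ℝ)+3)) * (|x ℓ m| * |x (ℓ + 1) m|)
        ≤ (((ℓ:ℝ)+2)^2 * x ℓ m ^ 2 + ((ℓ:ℝ)+3)^2 * x (ℓ + 1) m ^ 2) / 2 := by
      have hco : (2 * C₅ ℓ m.1 * ((ℓ:ℝ)+2) * ((ℓ:ℝ)+3)) ≤ ((ℓ:ℝ)+2) * ((ℓ:ℝ)+3) := by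
        nlinarith [Nat.cast_nonneg (α := ℝ) ℓ]
      have h1 : (2 * C₅ ℓ m.1 * ((ℓ:ℝ)+2) * ((ℓ:ℝ)+3)) * (|x ℓ m| * |x (ℓ + 1) m|)
          ≤ (((ℓ:ℝ)+2) * ((ℓ:ℝ)+3)) * (|x ℓ m| * |x (ℓ + 1) m|) :=
        mul_le_mul_of_nonneg_right hco (mul_nonneg (abs_nonneg _) (abs_nonneg _))
      nlinarith [sq_nonneg (((ℓ:ℝ)+2) * |x ℓ m| - ((ℓ:ℝ)+3) * |x (ℓ + 1) m|),
        sq_abs (x ℓ m), sq_abs (x (ℓ + 1) m)]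
    have hp1 : (0:ℝ) ≤ ((ℓ:ℝ)+2)^2 * x ℓ m ^ 2 := by positivity
    have hp2 : (0:ℝ) ≤ ((ℓ:ℝ)+3)^2 * x (ℓ + 1) m ^ 2 := by positivity
    linarith
  refine ⟨HS1, HS2, ?_⟩
  -- now the inequality
  have hSf₁ : Summable fun p : ℕ × (ℤ × ℤ × ℤ × ℤ) =>
      αc p.1 p.2.1 * x p.1 p.2 ^ 2 + βc p.1 p.2.1 * x p.1 p.2 * x (p.1 + 1) p.2 :=
    summable_abs_iff.mp HS1
  have hSf₂ : Summable fun p : ℕ × (ℤ × ℤ × ℤ × ℤ) =>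
      ((p.1 : ℝ) + 2) ^ 2 * x p.1 p.2 ^ 2
        + 2 * C₅ p.1 p.2.1 * ((p.1 : ℝ) + 2) * ((p.1 : ℝ) + 3)
          * x p.1 p.2 * x (p.1 + 1) p.2 :=
    summable_abs_iff.mp HS2
  -- E and F
  have hEnn : ∀ p, 0 ≤ Ef x p := by
    rintro ⟨ℓ, m⟩
    by_cases hx : x ℓ m = 0
    · show 0 ≤ dd ℓ m.1 * x ℓ m ^ 2
      rw [hx]; ring_nf; exact le_refl 0
    · obtain ⟨h2, hm0, _⟩ := hsupp ℓ m hx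
      exact mul_nonneg (dd_nonneg ℓ h2 m.1 hm0) (sq_nonneg _)
  have hFnn : ∀ p, 0 ≤ Ff x p := fun p => mul_nonneg (ee_nonneg _ _) (sq_nonneg _)
  have hSE : Summable (Ef x) := by
    apply Summable.of_nonneg_of_le hEnn _ (hsum.mul_left 2 |>.congr
      (fun p => by show 2 * (((p.1:ℝ)+2)^2 * x p.1 p.2 ^2) = 2*((p.1:ℝ)+2)^2 * x p.1 p.2 ^2; ring))
    rintro ⟨ℓ, m⟩
    show dd ℓ m.1 * x ℓ m ^ 2 ≤ 2 * ((ℓ:ℝ)+2)^2 * x ℓ m ^ 2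
    by_cases hx : x ℓ m = 0
    · rw [hx]; ring_nf; exact le_refl 0
    · obtain ⟨h2, hm0, hml⟩ := hsupp ℓ m hx
      have hdd : dd ℓ m.1 ≤ Ac ℓ m.1 := by
        unfold dd; rw [if_pos h2]
        have : 0 ≤ Gc ℓ * C₅ ℓ m.1 * tw ℓ :=
          mul_nonneg (mul_nonneg (Gc_nonneg ℓ h2) (C5_nonneg ℓ m.1)) (tw_pos ℓ).le
        linarith
      have hAc : Ac ℓ m.1 ≤ 2 * ((ℓ:ℝ)+2)^2 := by
        have h1 : αc ℓ m.1 ≤ |αc ℓ m.1| := le_abs_self _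
        have h2' := alpha_abs ℓ m.1 h2 hm0 hml
        unfold Ac
        nlinarith [sq_nonneg ((ℓ:ℝ)+2)]
      exact mul_le_mul_of_nonneg_right (le_trans hdd hAc) (sq_nonneg _)
  have hSF : Summable (Ff x) := by
    apply Summable.of_nonneg_of_le hFnn _ hsum3
    rintro ⟨ℓ, m⟩
    exact mul_le_mul_of_nonneg_right (ee_le ℓ m.1) (sq_nonneg _)
  have hSEσ : Summable ((Ef x) ∘ shiftσ) := hSE.comp_injective shiftσ_inj
  -- pointwise inequality
  have hpoint : ∀ p : ℕ × (ℤ × ℤ × ℤ × ℤ), Ef x p - Ff x p ≤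
      (αc p.1 p.2.1 * x p.1 p.2 ^ 2 + βc p.1 p.2.1 * x p.1 p.2 * x (p.1 + 1) p.2)
      - 18 / 85 * (((p.1 : ℝ) + 2) ^ 2 * x p.1 p.2 ^ 2
        + 2 * C₅ p.1 p.2.1 * ((p.1 : ℝ) + 2) * ((p.1 : ℝ) + 3)
          * x p.1 p.2 * x (p.1 + 1) p.2) := by
    rintro ⟨ℓ, m⟩
    show dd ℓ m.1 * x ℓ m ^ 2 - ee ℓ m.1 * x (ℓ + 1) m ^ 2 ≤ _
    by_cases hx : x ℓ m = 0
    · rw [hx]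
      have := hFnn (ℓ, m)
      show dd ℓ m.1 * (0:ℝ) ^ 2 - ee ℓ m.1 * x (ℓ + 1) m ^ 2 ≤
        αc ℓ m.1 * (0:ℝ) ^ 2 + βc ℓ m.1 * 0 * x (ℓ + 1) m
        - 18 / 85 * (((ℓ:ℝ)+2)^2 * (0:ℝ)^2
          + 2 * C₅ ℓ m.1 * ((ℓ:ℝ)+2) * ((ℓ:ℝ)+3) * 0 * x (ℓ + 1) m)
      have hF' : 0 ≤ ee ℓ m.1 * x (ℓ + 1) m ^ 2 :=
        mul_nonneg (ee_nonneg _ _) (sq_nonneg _)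
      nlinarith
    · obtain ⟨h2, hm0, hml⟩ := hsupp ℓ m hx
      have hbe := beta_eq ℓ m.1 hm0 hml
      have hdd : dd ℓ m.1 = Ac ℓ m.1 - Gc ℓ * C₅ ℓ m.1 * tw ℓ := by
        unfold dd; rw [if_pos h2]
      have hee : ee ℓ m.1 = Gc ℓ * C₅ ℓ m.1 / (4 * tw ℓ) := by
        unfold ee; rw [if_pos h2]
      have htp := tw_pos ℓ
      have hgc : 0 ≤ Gc ℓ * C₅ ℓ m.1 :=
        mul_nonneg (Gc_nonneg ℓ h2) (C5_nonneg ℓ m.1)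
      have hident : (αc ℓ m.1 * x ℓ m ^ 2 + βc ℓ m.1 * x ℓ m * x (ℓ + 1) m)
          - 18 / 85 * (((ℓ:ℝ)+2)^2 * x ℓ m ^ 2
            + 2 * C₅ ℓ m.1 * ((ℓ:ℝ)+2) * ((ℓ:ℝ)+3) * x ℓ m * x (ℓ + 1) m)
          - (dd ℓ m.1 * x ℓ m ^ 2 - ee ℓ m.1 * x (ℓ + 1) m ^ 2)
          = Gc ℓ * C₅ ℓ m.1 / (4 * tw ℓ) * (2 * tw ℓ * x ℓ m + x (ℓ + 1) m) ^ 2 := by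
        rw [hbe, hdd, hee]
        unfold Ac Gc
        field_simp
        ring
      have hnn : 0 ≤ Gc ℓ * C₅ ℓ m.1 / (4 * tw ℓ) * (2 * tw ℓ * x ℓ m + x (ℓ + 1) m) ^ 2 :=
        mul_nonneg (div_nonneg hgc (by linarith)) (sq_nonneg _)
      linarith
  -- tsum chain
  have step1 : ∀ p : ℕ × (ℤ × ℤ × ℤ × ℤ), Ff x p ≤ (Ef x ∘ shiftσ) p := by
    rintro ⟨ℓ, m⟩
    show ee ℓ m.1 * x (ℓ + 1) m ^ 2 ≤ dd (ℓ + 1) m.1 * x (ℓ + 1) m ^ 2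
    by_cases hx : x (ℓ + 1) m = 0
    · rw [hx]; ring_nf; exact le_refl 0
    · obtain ⟨h2, hm0, _⟩ := hsupp (ℓ + 1) m hx
      have h1 : 1 ≤ ℓ := by
        rcases Nat.eq_zero_or_pos ℓ with h0 | h1
        · subst h0; exact absurd (hx1 m) hx
        · exact h1
      exact mul_le_mul_of_nonneg_right (hkey ℓ h1 m.1 hm0) (sq_nonneg _)
  have t1 : ∑' p, Ff x p ≤ ∑' p, (Ef x ∘ shiftσ) p := Summable.tsum_le_tsum step1 hSF hSEσ
  have t2 : ∑' p, (Ef x ∘ shiftσ) p ≤ ∑' p, Ef x p :=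
    Summable.tsum_le_tsum_of_inj shiftσ shiftσ_inj (fun c _ => hEnn c) (fun b => le_rfl) hSEσ hSE
  have hDsum : Summable fun p : ℕ × (ℤ × ℤ × ℤ × ℤ) =>
      (αc p.1 p.2.1 * x p.1 p.2 ^ 2 + βc p.1 p.2.1 * x p.1 p.2 * x (p.1 + 1) p.2)
      - 18 / 85 * (((p.1 : ℝ) + 2) ^ 2 * x p.1 p.2 ^ 2
        + 2 * C₅ p.1 p.2.1 * ((p.1 : ℝ) + 2) * ((p.1 : ℝ) + 3)
          * x p.1 p.2 * x (p.1 + 1) p.2) :=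
    hSf₁.sub (hSf₂.mul_left (18 / 85))
  have t3 : ∑' p, (Ef x p - Ff x p) ≤ ∑' p : ℕ × (ℤ × ℤ × ℤ × ℤ),
      ((αc p.1 p.2.1 * x p.1 p.2 ^ 2 + βc p.1 p.2.1 * x p.1 p.2 * x (p.1 + 1) p.2)
      - 18 / 85 * (((p.1 : ℝ) + 2) ^ 2 * x p.1 p.2 ^ 2
        + 2 * C₅ p.1 p.2.1 * ((p.1 : ℝ) + 2) * ((p.1 : ℝ) + 3)
          * x p.1 p.2 * x (p.1 + 1) p.2)) :=
    Summable.tsum_le_tsum hpoint (hSE.sub hSF) hDsum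
  have t4 : ∑' p, (Ef x p - Ff x p) = ∑' p, Ef x p - ∑' p, Ff x p := Summable.tsum_sub hSE hSF
  have t5 : ∑' p : ℕ × (ℤ × ℤ × ℤ × ℤ),
      ((αc p.1 p.2.1 * x p.1 p.2 ^ 2 + βc p.1 p.2.1 * x p.1 p.2 * x (p.1 + 1) p.2)
      - 18 / 85 * (((p.1 : ℝ) + 2) ^ 2 * x p.1 p.2 ^ 2
        + 2 * C₅ p.1 p.2.1 * ((p.1 : ℝ) + 2) * ((p.1 : ℝ) + 3)
          * x p.1 p.2 * x (p.1 + 1) p.2))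
      = (∑' p : ℕ × (ℤ × ℤ × ℤ × ℤ),
          (αc p.1 p.2.1 * x p.1 p.2 ^ 2 + βc p.1 p.2.1 * x p.1 p.2 * x (p.1 + 1) p.2))
        - 18 / 85 * ∑' p : ℕ × (ℤ × ℤ × ℤ × ℤ),
          (((p.1 : ℝ) + 2) ^ 2 * x p.1 p.2 ^ 2
            + 2 * C₅ p.1 p.2.1 * ((p.1 : ℝ) + 2) * ((p.1 : ℝ) + 3)
              * x p.1 p.2 * x (p.1 + 1) p.2) := by
    rw [Summable.tsum_sub hSf₁ (hSf₂.mul_left (18 / 85)), tsum_mul_left]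
  linarith
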